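/- arXiv:2006.04088 — 2 statements merged into one kernel-verified Lean document; each statement's English description precedes it below -/
import Mathlib

section
/- Let F¹ : ℝ^d → ℝ be λ-strongly convex and L-smooth with minimizer θ₁*, and suppose ‖θ₁ - θ₁*‖ ≤ (1/2 - α)√(λ/L)Δ and ‖θⱼ - θ₁*‖ ≥ (1/2 + α)Δ with α ∈ (0, 1/2), Δ > 0. Then F¹(θⱼ) - F¹(θ₁) ≥ α λ Δ². -/
open scoped RealInnerProductSpace

/-- Loss gap between an incorrect cluster parameter and the correct one:
`F¹(θⱼ) - F¹(θ₁) ≥ α lam Δ²`. -/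
theorem loss_gap {d : ℕ} (F : EuclideanSpace ℝ (Fin d) → ℝ)
    (gradF : EuclideanSpace ℝ (Fin d) → EuclideanSpace ℝ (Fin d))
    (lam L : ℝ) (hlam : 0 < lam) (hlamL : lam ≤ L)
    (hgrad : ∀ θ, HasGradientAt F (gradF θ) θ)
    (hsc : ∀ θ θ', F θ' ≥ F θ + ⟪gradF θ, θ' - θ⟫ + lam / 2 * ‖θ' - θ‖ ^ 2)
    (hsmooth : ∀ θ θ', ‖gradF θ - gradF θ'‖ ≤ L * ‖θ - θ'‖)
    (θs : EuclideanSpace ℝ (Fin d)) (hmin : ∀ θ, F θs ≤ F θ) (hgradmin : gradF θs = 0)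
    (θ₁ θj : EuclideanSpace ℝ (Fin d)) (α Δ : ℝ) (hα : α ∈ Set.Ioo (0 : ℝ) (1/2)) (hΔ : 0 < Δ)
    (hclose : ‖θ₁ - θs‖ ≤ (1/2 - α) * Real.sqrt (lam / L) * Δ)
    (hfar : ‖θj - θs‖ ≥ (1/2 + α) * Δ) :
    F θj - F θ₁ ≥ α * lam * Δ ^ 2 := by
  obtain ⟨hα0, hα2⟩ := hα
  have hL : (0 : ℝ) < L := lt_of_lt_of_le hlam hlamL
  set v := θ₁ - θs with hv
  -- derivative of the line restriction
  have hφ : ∀ t : ℝ, HasDerivAt (fun t : ℝ => F (θs + t • v))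
      ⟪gradF (θs + t • v), v⟫ t := by
    intro t
    have hline : HasDerivAt (fun t : ℝ => θs + t • v) v t := by
      simpa using ((hasDerivAt_id t).smul_const v).const_add θs
    have h1 := (hgrad (θs + t • v)).hasFDerivAt
    have := h1.comp_hasDerivAt t hline
    simp [InnerProductSpace.toDual_apply_apply] at this; exact this
  -- descent lemma: F θ₁ ≤ F θs + L/2 ‖v‖²
  have key : F θ₁ ≤ F θs + L / 2 * ‖v‖ ^ 2 := by
    set ψ := fun t : ℝ => F (θs + t • v) - L * ‖v‖ ^ 2 * t ^ 2 / 2 with hψdef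
    have hψ : ∀ t : ℝ, HasDerivAt ψ
        (⟪gradF (θs + t • v), v⟫ - L * ‖v‖ ^ 2 * t) t := by
      intro t
      have h2 : HasDerivAt (fun t : ℝ => L * ‖v‖ ^ 2 * t ^ 2 / 2)
          (L * ‖v‖ ^ 2 * t) t := by
        have := ((hasDerivAt_pow 2 t).const_mul (L * ‖v‖ ^ 2)).div_const 2
        exact this.congr_deriv (by ring)
      exact (hφ t).sub h2
    have mono : AntitoneOn ψ (Set.Icc (0 : ℝ) 1) := by
      apply antitoneOn_of_deriv_nonpos (convex_Icc 0 1)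
      · exact fun t _ => (hψ t).continuousAt.continuousWithinAt
      · exact fun t _ => (hψ t).differentiableAt.differentiableWithinAt
      · intro t ht
        rw [interior_Icc] at ht
        rw [(hψ t).deriv]
        have hb : ‖gradF (θs + t • v)‖ ≤ L * (t * ‖v‖) := by
          have := hsmooth (θs + t • v) θs
          simpa [hgradmin, norm_smul, abs_of_pos ht.1] using this
        have : ⟪gradF (θs + t • v), v⟫ ≤ L * (t * ‖v‖) * ‖v‖ :=
          le_trans (real_inner_le_norm _ _)
            (mul_le_mul_of_nonneg_right hb (norm_nonneg v))
        nlinarith [this]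
    have h01 := mono (Set.left_mem_Icc.2 zero_le_one)
      (Set.right_mem_Icc.2 zero_le_one) zero_le_one
    have hψ0 : ψ 0 = F θs := by simp [hψdef]
    have hψ1 : ψ 1 = F θ₁ - L * ‖v‖ ^ 2 / 2 := by
      simp [hψdef, hv]
    rw [hψ0, hψ1] at h01
    linarith
  -- strong convexity lower bound at θj
  have hj : F θj ≥ F θs + lam / 2 * ‖θj - θs‖ ^ 2 := by
    have := hsc θs θj
    simpa [hgradmin] using this
  -- put together
  have hs : Real.sqrt (lam / L) ^ 2 = lam / L :=
    Real.sq_sqrt (div_nonneg hlam.le hL.le)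
  have hs0 : (0 : ℝ) ≤ Real.sqrt (lam / L) := Real.sqrt_nonneg _
  have hr2 : ‖v‖ ^ 2 ≤ ((1/2 - α) * Real.sqrt (lam / L) * Δ) ^ 2 :=
    pow_le_pow_left₀ (norm_nonneg v) hclose 2
  have hR2 : ((1/2 + α) * Δ) ^ 2 ≤ ‖θj - θs‖ ^ 2 :=
    pow_le_pow_left₀ (by positivity) hfar 2
  have hLlam : L * (lam / L) = lam := by field_simp
  have hupper : L / 2 * ‖v‖ ^ 2 ≤ lam / 2 * ((1/2 - α) * Δ) ^ 2 := by
    have heq : L * ((1/2 - α) * Real.sqrt (lam / L) * Δ) ^ 2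
        = lam * ((1/2 - α) * Δ) ^ 2 := by
      have : ((1/2 - α) * Real.sqrt (lam / L) * Δ) ^ 2
          = (lam / L) * ((1/2 - α) * Δ) ^ 2 := by
        rw [mul_pow, mul_pow, hs]; ring
      rw [this, ← mul_assoc, hLlam]
    nlinarith [hr2, hL]
  have hlower : lam / 2 * ‖θj - θs‖ ^ 2 ≥ lam / 2 * ((1/2 + α) * Δ) ^ 2 := by
    nlinarith [hR2, hlam]
  have hfin : lam / 2 * ((1/2 + α) * Δ) ^ 2 - lam / 2 * ((1/2 - α) * Δ) ^ 2
      = α * lam * Δ ^ 2 := by ring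
  linarith [hj, key, hupper, hlower]
end

section
/- Let X ∈ ℝ^{N×d} be a random matrix with i.i.d. N(0,1) entries and ε ∈ ℝ^N a random vector with distribution N(0, σ²I_N), independent of X. Then there exist universal constants c₂, c₃, c₄ such that with probability at least 1 - c₂ exp(-c₃ min{d, N}), ‖Xᵀε‖ ≤ c₄ σ √(dN). -/
open MeasureTheory ProbabilityTheory Matrix
open scoped ProbabilityTheory

namespace CrossTerm

open Real
open scoped ENNReal NNReal

/-- Tonelli for finite products: `Fin n` version. -/
lemma lintegral_fin_pi_prod {n : ℕ} {α : Fin n → Type*} [∀ i, MeasurableSpace (α i)]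
    (μ : ∀ i, Measure (α i)) [∀ i, SigmaFinite (μ i)] (f : ∀ i, α i → ℝ≥0∞)
    (hf : ∀ i, Measurable (f i)) :
    ∫⁻ x : ∀ i, α i, ∏ i, f i (x i) ∂Measure.pi μ = ∏ i, ∫⁻ y, f i y ∂μ i := by
  induction n with
  | zero =>
      simp [Measure.pi_of_empty μ]
  | succ n n_ih =>
      calc
        ∫⁻ x : ∀ i, α i, ∏ i, f i (x i) ∂Measure.pi μ
            = ∫⁻ y : α 0 × ((j : Fin n) → α ((0 : Fin (n+1)).succAbove j)),
                f 0 y.1 * ∏ j : Fin n, f ((0 : Fin (n+1)).succAbove j) (y.2 j)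
                ∂((μ 0).prod (Measure.pi fun j => μ ((0 : Fin (n+1)).succAbove j))) := by
          rw [← (measurePreserving_piFinSuccAbove μ 0).lintegral_comp_emb
            (MeasurableEquiv.piFinSuccAbove α 0).measurableEmbedding]
          congr 1
          ext x
          rw [Fin.prod_univ_succAbove _ 0]
          rfl
        _ = (∫⁻ y, f 0 y ∂μ 0) *
              ∏ j : Fin n, ∫⁻ y, f ((0 : Fin (n+1)).succAbove j) y
                ∂μ ((0 : Fin (n+1)).succAbove j) := by
          rw [lintegral_prod_mul (f := f 0)
            (g := fun w : (j : Fin n) → α ((0 : Fin (n+1)).succAbove j) =>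
              ∏ j : Fin n, f ((0 : Fin (n+1)).succAbove j) (w j))
            (hf 0).aemeasurable
            (Measurable.aemeasurable (Finset.measurable_prod _ fun j _ =>
                (hf _).comp (measurable_pi_apply j)))]
          rw [n_ih (fun j => μ ((0 : Fin (n+1)).succAbove j))
            (fun j => f ((0 : Fin (n+1)).succAbove j)) (fun j => hf _)]
        _ = ∏ i, ∫⁻ y, f i y ∂μ i :=
          (Fin.prod_univ_succAbove (fun i => ∫⁻ y, f i y ∂μ i) 0).symm

/-- Tonelli for finite products indexed by a fintype. -/
lemma lintegral_pi_prod {ι : Type*} [Fintype ι] {α : ι → Type*} [∀ i, MeasurableSpace (α i)]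
    (μ : ∀ i, Measure (α i)) [∀ i, SigmaFinite (μ i)] (f : ∀ i, α i → ℝ≥0∞)
    (hf : ∀ i, Measurable (f i)) :
    ∫⁻ x : ∀ i, α i, ∏ i, f i (x i) ∂Measure.pi μ = ∏ i, ∫⁻ y, f i y ∂μ i := by
  let e := (Fintype.equivFin ι).symm
  rw [← (measurePreserving_piCongrLeft μ e).lintegral_comp_emb
    (MeasurableEquiv.piCongrLeft α e).measurableEmbedding]
  have h1 : ∀ x : ∀ i, α (e i),
      (fun x : ∀ i, α i => ∏ i, f i (x i)) (MeasurableEquiv.piCongrLeft α e x)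
        = ∏ i, f (e i) (x i) := by
    intro x
    simp only [MeasurableEquiv.coe_piCongrLeft]
    rw [← e.prod_comp]
    exact Finset.prod_congr rfl fun i _ => by rw [Equiv.piCongrLeft_apply_apply]
  calc ∫⁻ x, (fun x : ∀ i, α i => ∏ i, f i (x i)) (MeasurableEquiv.piCongrLeft α e x)
        ∂(Measure.pi fun i => μ (e i))
      = ∫⁻ x, ∏ i, f (e i) (x i) ∂(Measure.pi fun i => μ (e i)) := by
        exact lintegral_congr h1
    _ = ∏ i, ∫⁻ y, f (e i) y ∂μ (e i) :=
        lintegral_fin_pi_prod (fun i => μ (e i)) (fun i => f (e i)) (fun i => hf (e i))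
    _ = ∏ i, ∫⁻ y, f i y ∂μ i := e.prod_comp (fun i => ∫⁻ y, f i y ∂μ i)

lemma lintegral_gaussian_exp_linear (c : ℝ) :
    ∫⁻ x, ENNReal.ofReal (rexp (c * x)) ∂(gaussianReal 0 1)
      = ENNReal.ofReal (rexp (c ^ 2 / 2)) := by
  rw [gaussianReal_of_var_ne_zero 0 one_ne_zero]
  rw [lintegral_withDensity_eq_lintegral_mul _ (measurable_gaussianPDF 0 1)
    (by fun_prop)]
  have key : ∀ x : ℝ, gaussianPDF 0 1 x * ENNReal.ofReal (rexp (c * x))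
      = ENNReal.ofReal (rexp (c ^ 2 / 2)) * gaussianPDF c 1 x := by
    intro x
    rw [gaussianPDF, gaussianPDF, ← ENNReal.ofReal_mul (gaussianPDFReal_nonneg 0 1 x),
      ← ENNReal.ofReal_mul (exp_nonneg _)]
    congr 1
    simp only [gaussianPDFReal]
    have hx : rexp (-(x - 0)^2 / (2*((1:ℝ≥0):ℝ))) * rexp (c*x)
        = rexp (c^2/2) * rexp (-(x-c)^2/(2*((1:ℝ≥0):ℝ))) := by
      rw [← exp_add, ← exp_add]
      congr 1
      push_cast
      ring
    rw [mul_assoc, hx]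
    ring
  simp only [Pi.mul_apply, key]
  rw [lintegral_const_mul _ (measurable_gaussianPDF c 1),
    lintegral_gaussianPDF_eq_one c one_ne_zero, mul_one]

lemma lintegral_gaussian_exp_sq_le {v : ℝ≥0} (hv : v ≠ 0) {s : ℝ} (hs0 : 0 ≤ s)
    (hs : s * v ≤ 1 / 4) :
    ∫⁻ x, ENNReal.ofReal (rexp (s * x ^ 2)) ∂(gaussianReal 0 v)
      ≤ ENNReal.ofReal (Real.sqrt 2) := by
  have hvpos : (0:ℝ) < v := lt_of_le_of_ne v.coe_nonneg (by exact_mod_cast (Ne.symm hv))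
  set b : ℝ := 1 / (2 * v) - s with hb
  have hbge : 1 / (4 * v) ≤ b := by
    rw [hb]
    have : s ≤ 1 / (4 * v) := by
      rw [le_div_iff₀ (by positivity)]
      calc s * (4 * v) = 4 * (s * v) := by ring
        _ ≤ 4 * (1/4) := by linarith
        _ = 1 := by norm_num
    have h2 : 1 / (4 * (v:ℝ)) + 1 / (4 * (v:ℝ)) = 1 / (2 * (v:ℝ)) := by
      field_simp
      ring
    linarith
  have hbpos : 0 < b := lt_of_lt_of_le (by positivity) hbge
  rw [gaussianReal_of_var_ne_zero 0 hv]
  rw [lintegral_withDensity_eq_lintegral_mul _ (measurable_gaussianPDF 0 v)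
    (by fun_prop)]
  have key : ∀ x : ℝ, gaussianPDF 0 v x * ENNReal.ofReal (rexp (s * x ^ 2))
      = ENNReal.ofReal ((√(2 * π * v))⁻¹ * rexp (-b * x ^ 2)) := by
    intro x
    rw [gaussianPDF, ← ENNReal.ofReal_mul (gaussianPDFReal_nonneg 0 v x)]
    congr 1
    simp only [gaussianPDFReal]
    rw [mul_assoc]
    congr 1
    rw [← exp_add]
    congr 1
    rw [hb]
    have hvne : (v:ℝ) ≠ 0 := ne_of_gt hvpos
    field_simp
    ring
  simp only [Pi.mul_apply, key]
  rw [← ofReal_integral_eq_lintegral_ofReal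
    (((integrable_exp_neg_mul_sq hbpos).const_mul _))
    (Filter.Eventually.of_forall fun x => by positivity)]
  rw [integral_const_mul, integral_gaussian]
  apply ENNReal.ofReal_le_ofReal
  have h1 : √(π / b) ≤ √(π * (4 * v)) := by
    apply Real.sqrt_le_sqrt
    rw [div_le_iff₀ hbpos]
    calc π = (1 / (4*v)) * (π * (4 * v)) := by field_simp
      _ ≤ b * (π * (4*v)) := by
          apply mul_le_mul_of_nonneg_right hbge (by positivity)
      _ = π * (4 * v) * b := by ring
  calc (√(2 * π * v))⁻¹ * √(π / b) ≤ (√(2 * π * v))⁻¹ * √(π * (4 * v)) := by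
        apply mul_le_mul_of_nonneg_left h1 (by positivity)
    _ = √2 := by
        have hπv : 0 < √(π * v) := Real.sqrt_pos.mpr (by positivity)
        have e1 : √(2 * π * (v:ℝ)) = √2 * √(π*v) := by
          rw [show 2*π*(v:ℝ) = 2*(π*(v:ℝ)) by ring, Real.sqrt_mul (by norm_num : (0:ℝ) ≤ 2)]
        have e2 : √(π * (4*(v:ℝ))) = 2*√(π*v) := by
          rw [show π*(4*(v:ℝ)) = 4*(π*(v:ℝ)) by ring,
            Real.sqrt_mul (by norm_num : (0:ℝ) ≤ 4),
            show √(4:ℝ) = 2 by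
              rw [show (4:ℝ) = 2^2 by norm_num, Real.sqrt_sq (by norm_num : (0:ℝ) ≤ 2)]]
        rw [e1, e2]
        have h2' : (√2 * √(π*(v:ℝ)))⁻¹ * (2*√(π*(v:ℝ))) = 2 / √2 := by
          field_simp
        rw [h2', Real.div_sqrt]

/-- Chernoff-type bound. -/
lemma chernoff {α : Type*} [MeasurableSpace α] (m : Measure α) {g : α → ℝ}
    (hg : Measurable g) (a : ℝ) :
    m {x | a ≤ g x} ≤ ENNReal.ofReal (rexp (-a)) * ∫⁻ x, ENNReal.ofReal (rexp (g x)) ∂m := by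
  have hset : {x | a ≤ g x} = {x | ENNReal.ofReal (rexp a) ≤ ENNReal.ofReal (rexp (g x))} := by
    ext x
    simp only [Set.mem_setOf_eq]
    rw [ENNReal.ofReal_le_ofReal_iff (exp_nonneg _), exp_le_exp]
  have h := mul_meas_ge_le_lintegral₀ (μ := m)
    (f := fun x => ENNReal.ofReal (rexp (g x)))
    (by fun_prop) (ENNReal.ofReal (rexp a))
  rw [← hset] at h
  have hne : ENNReal.ofReal (rexp a) ≠ 0 := by
    simp [ENNReal.ofReal_eq_zero, not_le, exp_pos]
  have hnetop : ENNReal.ofReal (rexp a) ≠ ⊤ := ENNReal.ofReal_ne_top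
  have h2 : m {x | a ≤ g x} ≤ (∫⁻ x, ENNReal.ofReal (rexp (g x)) ∂m) / ENNReal.ofReal (rexp a) := by
    rw [ENNReal.le_div_iff_mul_le (Or.inl hne) (Or.inl hnetop), mul_comm]
    exact h
  refine h2.trans_eq ?_
  rw [ENNReal.div_eq_inv_mul, ← ENNReal.ofReal_inv_of_pos (exp_pos _), ← Real.exp_neg]

/-- The joint law of a finite family of independent real random variables is
the product of the individual laws. -/
lemma map_joint_eq_pi {Ω : Type*} [MeasureSpace Ω] [IsProbabilityMeasure (ℙ : Measure Ω)]
    {ι : Type*} [Fintype ι] (f : ι → Ω → ℝ) (hm : ∀ i, Measurable (f i))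
    (h : iIndepFun f ℙ) :
    Measure.map (fun ω i => f i ω) ℙ = Measure.pi (fun i => Measure.map (f i) ℙ) := by
  haveI : ∀ i, IsProbabilityMeasure (Measure.map (f i) ℙ) :=
    fun i => Measure.isProbabilityMeasure_map (hm i).aemeasurable
  refine (Measure.pi_eq (μ := fun i => Measure.map (f i) ℙ) fun s hs => ?_).symm
  rw [Measure.map_apply (measurable_pi_lambda _ hm) (MeasurableSet.univ_pi hs)]
  have hpre : (fun ω i => f i ω) ⁻¹' (Set.univ.pi s) = ⋂ i ∈ Finset.univ, f i ⁻¹' s i := by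
    ext ω
    simp [Set.mem_pi]
  rw [hpre, h.measure_inter_preimage_eq_mul Finset.univ (fun i _ => hs i)]
  exact Finset.prod_congr rfl fun i _ =>
    (Measure.map_apply (hm i) (hs i)).symm

lemma sqrt_two_pow_le (n : ℕ) : Real.sqrt 2 ^ n ≤ rexp ((n:ℝ) / 2) := by
  have h1 : Real.sqrt 2 ≤ rexp (1/2) := by
    rw [show (1:ℝ)/2 = 1/2 by norm_num, Real.exp_half]
    exact Real.sqrt_le_sqrt (by linarith [Real.add_one_le_exp 1])
  calc Real.sqrt 2 ^ n ≤ rexp (1/2) ^ n :=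
        pow_le_pow_left₀ (Real.sqrt_nonneg 2) h1 n
    _ = rexp ((n:ℝ) / 2) := by
        rw [← Real.exp_nat_mul]
        congr 1
        ring

lemma exp_weight (n : ℕ) : rexp (-(n:ℝ)) * Real.sqrt 2 ^ n ≤ rexp (-(1/2) * (n:ℝ)) := by
  calc rexp (-(n:ℝ)) * Real.sqrt 2 ^ n ≤ rexp (-(n:ℝ)) * rexp ((n:ℝ)/2) :=
        mul_le_mul_of_nonneg_left (sqrt_two_pow_le n) (Real.exp_nonneg _)
    _ = rexp (-(n:ℝ) + (n:ℝ)/2) := (Real.exp_add _ _).symm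
    _ = rexp (-(1/2) * (n:ℝ)) := by congr 1; ring

lemma inner_bound (N d : ℕ) (hN : 0 < N) {σ : ℝ} (hσ : 0 < σ)
    (e : Fin N → ℝ) (he : ∑ i, e i ^ 2 ≤ 4 * σ^2 * N) :
    ∫⁻ x : Fin N × Fin d → ℝ,
        ENNReal.ofReal (rexp ((1/(16*σ^2*N)) * ∑ j : Fin d, (∑ i, x (i,j) * e i)^2))
        ∂(Measure.pi fun _ : Fin N × Fin d => gaussianReal 0 1)
      ≤ (ENNReal.ofReal (Real.sqrt 2))^d := by
  set t : ℝ := 1/(16*σ^2*N) with ht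
  have ht0 : 0 ≤ t := by positivity
  set c : ℝ := Real.sqrt (2*t) with hc
  have hc2 : c^2 = 2*t := Real.sq_sqrt (by positivity)
  set π₁ : Measure (Fin N × Fin d → ℝ) := Measure.pi fun _ => gaussianReal 0 1 with hπ₁
  set π₃ : Measure (Fin d → ℝ) := Measure.pi fun _ : Fin d => gaussianReal 0 1 with hπ₃
  set Y : Fin d → (Fin N × Fin d → ℝ) → ℝ := fun j x => ∑ i, x (i,j) * e i with hYdef
  have hY : ∀ j, Measurable (Y j) := fun j =>
    Finset.measurable_sum _ fun i _ => (measurable_pi_apply (i,j)).mul_const _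
  -- Step 1: duplication
  have step1 : ∀ x, ENNReal.ofReal (rexp (t * ∑ j, (Y j x)^2))
      = ∫⁻ g : Fin d → ℝ, ENNReal.ofReal (rexp (∑ j, (c * Y j x) * g j)) ∂π₃ := by
    intro x
    have : ∀ g : Fin d → ℝ, ENNReal.ofReal (rexp (∑ j, (c * Y j x) * g j))
        = ∏ j, ENNReal.ofReal (rexp ((c * Y j x) * g j)) := by
      intro g
      rw [Real.exp_sum, ENNReal.ofReal_prod_of_nonneg (fun j _ => Real.exp_nonneg _)]
    simp_rw [this]
    rw [lintegral_pi_prod _ (fun j u => ENNReal.ofReal (rexp ((c * Y j x) * u)))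
      (fun j => by fun_prop)]
    simp_rw [lintegral_gaussian_exp_linear]
    rw [← ENNReal.ofReal_prod_of_nonneg (fun j _ => Real.exp_nonneg _), ← Real.exp_sum]
    congr 2
    rw [Finset.mul_sum]
    refine Finset.sum_congr rfl fun j _ => ?_
    rw [mul_pow, hc2]
    ring
  -- rewrite the integrand and swap
  have hswap : ∫⁻ x, ENNReal.ofReal (rexp (t * ∑ j, (Y j x)^2)) ∂π₁
      = ∫⁻ g, ∫⁻ x, ENNReal.ofReal (rexp (∑ j, (c * Y j x) * g j)) ∂π₁ ∂π₃ := by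
    simp_rw [step1]
    exact lintegral_lintegral_swap (by
      apply Measurable.aemeasurable
      apply (ENNReal.measurable_ofReal.comp Real.measurable_exp).comp
      apply Finset.measurable_sum
      intro j _
      exact ((measurable_const.mul ((hY j).comp measurable_fst)).mul
        ((measurable_pi_apply j).comp measurable_snd)))
  -- Step 3: inner integral over x
  have step3 : ∀ g : Fin d → ℝ,
      ∫⁻ x, ENNReal.ofReal (rexp (∑ j, (c * Y j x) * g j)) ∂π₁
        = ENNReal.ofReal (rexp (t * (∑ i, e i ^ 2) * (∑ j, (g j)^2))) := by
    intro g
    have hexp : ∀ x : Fin N × Fin d → ℝ, (∑ j, (c * Y j x) * g j)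
        = ∑ p : Fin N × Fin d, (c * e p.1 * g p.2) * x p := by
      intro x
      rw [Fintype.sum_prod_type]
      rw [Finset.sum_comm]
      refine Finset.sum_congr rfl fun j _ => ?_
      simp only [hYdef]
      simp only [Finset.sum_mul, Finset.mul_sum]
      exact Finset.sum_congr rfl fun i _ => by ring
    simp_rw [hexp]
    have : ∀ x : Fin N × Fin d → ℝ,
        ENNReal.ofReal (rexp (∑ p : Fin N × Fin d, (c * e p.1 * g p.2) * x p))
        = ∏ p : Fin N × Fin d, ENNReal.ofReal (rexp ((c * e p.1 * g p.2) * x p)) := by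
      intro x
      rw [Real.exp_sum, ENNReal.ofReal_prod_of_nonneg (fun p _ => Real.exp_nonneg _)]
    simp_rw [this]
    rw [lintegral_pi_prod _ (fun (p : Fin N × Fin d) u => ENNReal.ofReal (rexp ((c * e p.1 * g p.2) * u)))
      (fun p => by fun_prop)]
    simp_rw [lintegral_gaussian_exp_linear]
    rw [← ENNReal.ofReal_prod_of_nonneg (fun p _ => Real.exp_nonneg _), ← Real.exp_sum]
    congr 2
    rw [Fintype.sum_prod_type]
    have : ∀ i : Fin N, ∑ j : Fin d, (c * e i * g j)^2/2
        = (t * e i ^ 2) * ∑ j, (g j)^2 := by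
      intro i
      rw [Finset.mul_sum]
      refine Finset.sum_congr rfl fun j _ => ?_
      rw [mul_pow, mul_pow, hc2]
      ring
    simp_rw [this]
    rw [← Finset.sum_mul, ← Finset.mul_sum]
  rw [hswap]
  simp_rw [step3]
  -- Step 4
  set s : ℝ := t * ∑ i, e i ^ 2 with hs
  have hs0 : 0 ≤ s := mul_nonneg ht0 (Finset.sum_nonneg fun i _ => sq_nonneg _)
  have hs14 : s ≤ 1/4 := by
    rw [hs, ht]
    have hNpos : (0:ℝ) < N := by exact_mod_cast hN
    rw [div_mul_eq_mul_div, one_mul, div_le_div_iff₀ (by positivity) (by norm_num)]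
    nlinarith [he]
  have hfin : ∀ g : Fin d → ℝ, ENNReal.ofReal (rexp (s * ∑ j, (g j)^2))
      = ∏ j : Fin d, ENNReal.ofReal (rexp (s * (g j)^2)) := by
    intro g
    rw [Finset.mul_sum, Real.exp_sum, ENNReal.ofReal_prod_of_nonneg
      (fun j _ => Real.exp_nonneg _)]
  calc ∫⁻ g, ENNReal.ofReal (rexp (t * (∑ i, e i ^ 2) * ∑ j, (g j)^2)) ∂π₃
      = ∫⁻ g, ∏ j : Fin d, ENNReal.ofReal (rexp (s * (g j)^2)) ∂π₃ := by
        exact lintegral_congr fun g => by rw [← hfin g]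
    _ = ∏ j : Fin d, ∫⁻ u, ENNReal.ofReal (rexp (s * u^2)) ∂(gaussianReal 0 1) :=
        lintegral_pi_prod _ (fun j u => ENNReal.ofReal (rexp (s * u^2)))
          (fun j => by fun_prop)
    _ ≤ ∏ j : Fin d, ENNReal.ofReal (Real.sqrt 2) :=
        Finset.prod_le_prod' fun j _ =>
          lintegral_gaussian_exp_sq_le one_ne_zero hs0 (by simpa using hs14)
    _ = (ENNReal.ofReal (Real.sqrt 2))^d := by
        rw [Finset.prod_const, Finset.card_univ, Fintype.card_fin]

lemma core (N d : ℕ) (hN : 0 < N) (hd : 0 < d) {σ : ℝ} (hσ : 0 < σ) :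
    (Measure.pi (Sum.elim (fun _ : Fin N × Fin d => gaussianReal 0 1)
        (fun _ : Fin N => gaussianReal 0 ⟨σ^2, sq_nonneg σ⟩)))
      {x : ((Fin N × Fin d) ⊕ Fin N) → ℝ |
        ¬ Real.sqrt (∑ j : Fin d, (∑ i : Fin N, x (Sum.inl (i,j)) * x (Sum.inr i))^2)
          ≤ 4 * σ * Real.sqrt ((d:ℝ) * (N:ℝ))} ≤
      ENNReal.ofReal (2 * rexp (-(1/2) * min (d:ℝ) (N:ℝ))) := by
  have hσ2 : (0:ℝ) < σ^2 := pow_pos hσ 2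
  have hNR : (0:ℝ) < N := by exact_mod_cast hN
  set vσ : ℝ≥0 := ⟨σ^2, sq_nonneg σ⟩ with hvσdef
  have hvσ : vσ ≠ 0 := by
    intro h
    have h2 : (vσ : ℝ) = 0 := by rw [h]; simp
    rw [hvσdef] at h2
    exact hσ2.ne' h2
  set μs : ((Fin N × Fin d) ⊕ Fin N) → Measure ℝ :=
    Sum.elim (fun _ => gaussianReal 0 1) (fun _ => gaussianReal 0 vσ) with hμs
  haveI hPM : ∀ k, IsProbabilityMeasure (μs k) := by
    rintro (p|i) <;> · rw [hμs]; simp only [Sum.elim_inl, Sum.elim_inr]; infer_instance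
  set t : ℝ := 1/(16*σ^2*N) with ht
  set Q : (((Fin N × Fin d) ⊕ Fin N) → ℝ) → ℝ :=
    fun x => ∑ j : Fin d, (∑ i : Fin N, x (Sum.inl (i,j)) * x (Sum.inr i))^2 with hQ
  set SqE : (((Fin N × Fin d) ⊕ Fin N) → ℝ) → ℝ :=
    fun x => ∑ i : Fin N, (x (Sum.inr i))^2 with hSqE
  set A : Set (((Fin N × Fin d) ⊕ Fin N) → ℝ) := {x | 4*σ^2*N ≤ SqE x} with hA
  set B : Set (((Fin N × Fin d) ⊕ Fin N) → ℝ) :=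
    {x | SqE x ≤ 4*σ^2*N ∧ (d:ℝ) ≤ t * Q x} with hB
  have hQnn : ∀ x, 0 ≤ Q x := fun x => Finset.sum_nonneg fun j _ => sq_nonneg _
  -- inclusion
  have hsub : {x : ((Fin N × Fin d) ⊕ Fin N) → ℝ |
      ¬ Real.sqrt (∑ j : Fin d, (∑ i : Fin N, x (Sum.inl (i,j)) * x (Sum.inr i))^2)
        ≤ 4 * σ * Real.sqrt ((d:ℝ) * (N:ℝ))} ⊆ A ∪ B := by
    intro x hx
    simp only [Set.mem_setOf_eq] at hx
    have h1 : 4 * σ * Real.sqrt ((d:ℝ) * (N:ℝ)) < Real.sqrt (Q x) := not_le.mp hx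
    have h2 : (4 * σ * Real.sqrt ((d:ℝ) * (N:ℝ)))^2 < (Real.sqrt (Q x))^2 :=
      pow_lt_pow_left₀ h1 (by positivity) two_ne_zero
    rw [Real.sq_sqrt (hQnn x)] at h2
    have h3 : (4 * σ * Real.sqrt ((d:ℝ) * (N:ℝ)))^2 = 16 * σ^2 * ((d:ℝ) * N) := by
      rw [mul_pow, mul_pow, Real.sq_sqrt (by positivity)]
      ring
    rw [h3] at h2
    rcases le_total (SqE x) (4*σ^2*N) with hc | hc
    · right
      refine ⟨hc, ?_⟩
      have : (d:ℝ) = t * (16 * σ^2 * ((d:ℝ) * N)) := by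
        rw [ht]
        field_simp
      rw [this]
      exact le_of_lt (by
        have ht0 : 0 < t := by rw [ht]; positivity
        exact (mul_lt_mul_iff_right₀ ht0).mpr h2)
    · left
      exact hc
  refine le_trans (measure_mono hsub) (le_trans (measure_union_le A B) ?_)
  -- the product splitting
  set E := MeasurableEquiv.sumPiEquivProdPi (fun _ : ((Fin N × Fin d) ⊕ Fin N) => ℝ) with hE
  have MP := measurePreserving_sumPiEquivProdPi μs
  set P1 : Measure (Fin N × Fin d → ℝ) := Measure.pi fun _ => gaussianReal 0 1 with hP1
  set P2 : Measure (Fin N → ℝ) := Measure.pi fun _ : Fin N => gaussianReal 0 vσ with hP2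
  have hmapeq : Measure.map E (Measure.pi μs) = P1.prod P2 := MP.map_eq
  -- bound for A
  have hA2meas : MeasurableSet {e : Fin N → ℝ | 4*σ^2*N ≤ ∑ i, (e i)^2} :=
    measurableSet_le measurable_const (by fun_prop)
  have hAbound : (Measure.pi μs) A ≤ ENNReal.ofReal (rexp (-(1/2) * min (d:ℝ) (N:ℝ))) := by
    have hAeq : A = E ⁻¹' (Set.univ ×ˢ {e : Fin N → ℝ | 4*σ^2*N ≤ ∑ i, (e i)^2}) := by
      ext x
      simp only [hA, Set.mem_setOf_eq, Set.mem_preimage, Set.mem_prod, Set.mem_univ, true_and]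
      rfl
    rw [hAeq, ← Measure.map_apply E.measurable (MeasurableSet.univ.prod hA2meas), hmapeq,
      Measure.prod_prod, measure_univ, one_mul]
    -- Chernoff on P2
    set g : (Fin N → ℝ) → ℝ := fun e => ∑ i, (1/(4*σ^2)) * (e i)^2 with hg
    have hsub2 : {e : Fin N → ℝ | 4*σ^2*N ≤ ∑ i, (e i)^2} ⊆ {e | (N:ℝ) ≤ g e} := by
      intro e he
      simp only [Set.mem_setOf_eq] at he ⊢
      have h1 : (N:ℝ) ≤ (1/(4*σ^2)) * ∑ i, (e i)^2 := by
        calc (N:ℝ) = (1/(4*σ^2)) * (4*σ^2*N) := by field_simp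
          _ ≤ (1/(4*σ^2)) * ∑ i, (e i)^2 :=
              mul_le_mul_of_nonneg_left he (by positivity)
      show (N:ℝ) ≤ g e
      rw [hg]
      simpa [Finset.mul_sum] using h1
    refine le_trans (measure_mono hsub2) ?_
    refine le_trans (chernoff P2 (by fun_prop) (N:ℝ)) ?_
    have hint : ∫⁻ e, ENNReal.ofReal (rexp (g e)) ∂P2 ≤ (ENNReal.ofReal (Real.sqrt 2))^N := by
      have : ∀ e : Fin N → ℝ, ENNReal.ofReal (rexp (g e))
          = ∏ i : Fin N, ENNReal.ofReal (rexp ((1/(4*σ^2)) * (e i)^2)) := by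
        intro e
        rw [hg, Real.exp_sum, ENNReal.ofReal_prod_of_nonneg (fun i _ => Real.exp_nonneg _)]
      simp_rw [this]
      rw [lintegral_pi_prod _ (fun (i : Fin N) u => ENNReal.ofReal (rexp ((1/(4*σ^2)) * u^2)))
        (fun i => by fun_prop)]
      calc ∏ _i : Fin N, ∫⁻ u, ENNReal.ofReal (rexp ((1/(4*σ^2)) * u^2)) ∂(gaussianReal 0 vσ)
          ≤ ∏ _i : Fin N, ENNReal.ofReal (Real.sqrt 2) := by
            refine Finset.prod_le_prod' fun i _ => ?_
            refine lintegral_gaussian_exp_sq_le hvσ (by positivity) ?_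
            have hv : (vσ : ℝ) = σ^2 := rfl
            rw [hv]
            refine le_of_eq ?_
            rw [div_mul_eq_mul_div, one_mul, div_eq_div_iff (by positivity) (by norm_num)]
            ring
        _ = (ENNReal.ofReal (Real.sqrt 2))^N := by
            rw [Finset.prod_const, Finset.card_univ, Fintype.card_fin]
    calc ENNReal.ofReal (rexp (-(N:ℝ))) * ∫⁻ e, ENNReal.ofReal (rexp (g e)) ∂P2
        ≤ ENNReal.ofReal (rexp (-(N:ℝ))) * (ENNReal.ofReal (Real.sqrt 2))^N :=
          mul_le_mul_right hint _
      _ = ENNReal.ofReal (rexp (-(N:ℝ)) * Real.sqrt 2 ^ N) := by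
          rw [← ENNReal.ofReal_pow (Real.sqrt_nonneg 2),
            ← ENNReal.ofReal_mul (Real.exp_nonneg _)]
      _ ≤ ENNReal.ofReal (rexp (-(1/2) * (N:ℝ))) := ENNReal.ofReal_le_ofReal (exp_weight N)
      _ ≤ ENNReal.ofReal (rexp (-(1/2) * min (d:ℝ) (N:ℝ))) := by
          apply ENNReal.ofReal_le_ofReal
          apply Real.exp_le_exp.mpr
          nlinarith [min_le_right (d:ℝ) (N:ℝ)]
  -- bound for B
  have hBbound : (Measure.pi μs) B ≤ ENNReal.ofReal (rexp (-(1/2) * min (d:ℝ) (N:ℝ))) := by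
    set B' : Set ((Fin N × Fin d → ℝ) × (Fin N → ℝ)) :=
      {y | (∑ i, (y.2 i)^2 ≤ 4*σ^2*N) ∧
        (d:ℝ) ≤ t * ∑ j : Fin d, (∑ i, y.1 (i,j) * y.2 i)^2} with hB'
    have hm1 : Measurable (fun y : (Fin N × Fin d → ℝ) × (Fin N → ℝ) => ∑ i, (y.2 i)^2) :=
      Finset.measurable_sum _ fun i _ =>
        ((measurable_pi_apply i).comp measurable_snd).pow_const 2
    have hm2 : Measurable (fun y : (Fin N × Fin d → ℝ) × (Fin N → ℝ) =>
        t * ∑ j : Fin d, (∑ i, y.1 (i,j) * y.2 i)^2) := by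
      apply Measurable.const_mul
      apply Finset.measurable_sum
      intro j _
      apply Measurable.pow_const
      apply Finset.measurable_sum
      intro i _
      exact ((measurable_pi_apply (i,j)).comp measurable_fst).mul
        ((measurable_pi_apply i).comp measurable_snd)
    have hB'meas : MeasurableSet B' :=
      (measurableSet_le hm1 measurable_const).inter (measurableSet_le measurable_const hm2)
    have hBeq : B = E ⁻¹' B' := by
      ext x
      simp only [hB, hB', Set.mem_setOf_eq, Set.mem_preimage]
      rfl
    rw [hBeq, ← Measure.map_apply E.measurable hB'meas, hmapeq,
      Measure.prod_apply_symm hB'meas]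
    set C : ℝ≥0∞ := ENNReal.ofReal (rexp (-(d:ℝ))) * (ENNReal.ofReal (Real.sqrt 2))^d with hC
    have hslice : ∀ e : Fin N → ℝ, P1 ((fun x => (x, e)) ⁻¹' B') ≤ C := by
      intro e
      by_cases hgood : ∑ i, (e i)^2 ≤ 4*σ^2*N
      · have hsl : (fun x => (x, e)) ⁻¹' B'
            ⊆ {x : Fin N × Fin d → ℝ | (d:ℝ) ≤ t * ∑ j : Fin d, (∑ i, x (i,j) * e i)^2} := by
          intro x hx
          exact hx.2
        refine le_trans (measure_mono hsl) ?_
        refine le_trans (chernoff P1 (g := fun x => t * ∑ j : Fin d, (∑ i, x (i,j) * e i)^2)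
          (by
            apply Measurable.const_mul
            apply Finset.measurable_sum
            intro j _
            apply Measurable.pow_const
            exact Finset.measurable_sum _ fun i _ => (measurable_pi_apply (i,j)).mul_const _)
          (d:ℝ)) ?_
        rw [hC]
        apply mul_le_mul_right
        rw [ht]
        exact inner_bound N d hN hσ e hgood
      · have : (fun x => (x, e)) ⁻¹' B' = ∅ := by
          ext x
          simp only [Set.mem_preimage, hB', Set.mem_setOf_eq, Set.mem_empty_iff_false,
            iff_false, not_and]
          intro h
          exact absurd h hgood
        rw [this]
        simp
    calc ∫⁻ e, P1 ((fun x => (x, e)) ⁻¹' B') ∂P2 ≤ ∫⁻ _e, C ∂P2 :=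
          lintegral_mono hslice
      _ = C := by rw [lintegral_const, measure_univ, mul_one]
      _ = ENNReal.ofReal (rexp (-(d:ℝ)) * Real.sqrt 2 ^ d) := by
          rw [hC, ← ENNReal.ofReal_pow (Real.sqrt_nonneg 2),
            ← ENNReal.ofReal_mul (Real.exp_nonneg _)]
      _ ≤ ENNReal.ofReal (rexp (-(1/2) * (d:ℝ))) := ENNReal.ofReal_le_ofReal (exp_weight d)
      _ ≤ ENNReal.ofReal (rexp (-(1/2) * min (d:ℝ) (N:ℝ))) := by
          apply ENNReal.ofReal_le_ofReal
          apply Real.exp_le_exp.mpr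
          nlinarith [min_le_left (d:ℝ) (N:ℝ)]
  calc (Measure.pi μs) A + (Measure.pi μs) B
      ≤ ENNReal.ofReal (rexp (-(1/2) * min (d:ℝ) (N:ℝ)))
        + ENNReal.ofReal (rexp (-(1/2) * min (d:ℝ) (N:ℝ))) := add_le_add hAbound hBbound
    _ = ENNReal.ofReal (2 * rexp (-(1/2) * min (d:ℝ) (N:ℝ))) := by
        rw [← ENNReal.ofReal_add (Real.exp_nonneg _) (Real.exp_nonneg _)]
        congr 1
        ring

end CrossTerm

/-- Cross-term bound (Lemma 2 of the paper): for a random `N × d` matrix `X` with i.i.d.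
standard Gaussian entries and an independent Gaussian noise vector `ε ~ N(0, σ²I_N)`,
with probability at least `1 - c₂ exp(-c₃ min{d, N})` we have `‖Xᵀε‖ ≤ c₄ σ √(dN)`. -/
theorem gaussian_cross_term_bound :
    ∃ c₂ c₃ c₄ : ℝ, 0 < c₂ ∧ 0 < c₃ ∧ 0 < c₄ ∧
      ∀ (Ω : Type) (_ : MeasureSpace Ω) (_ : IsProbabilityMeasure (ℙ : Measure Ω))
        (N d : ℕ) (X : Ω → Matrix (Fin N) (Fin d) ℝ) (ε : Ω → Fin N → ℝ) (σ : ℝ),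
        0 < σ →
        (∀ (i : Fin N) (j : Fin d), Measurable (fun ω => X ω i j)) → Measurable ε →
        (∀ (i : Fin N) (j : Fin d), Measure.map (fun ω => X ω i j) ℙ = gaussianReal 0 1) →
        (∀ i : Fin N, Measure.map (fun ω => ε ω i) ℙ = gaussianReal 0 ⟨σ ^ 2, sq_nonneg σ⟩) →
        iIndepFun
          (Sum.elim (fun (p : Fin N × Fin d) ω => X ω p.1 p.2) (fun (i : Fin N) ω => ε ω i))
          ℙ →
        ℙ {ω | Real.sqrt (∑ j : Fin d, ((X ω)ᵀ *ᵥ ε ω) j ^ 2) ≤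
               c₄ * σ * Real.sqrt (d * N)} ≥
          1 - ENNReal.ofReal (c₂ * Real.exp (-c₃ * min d N)) := by
  refine ⟨2, 1/2, 4, by norm_num, by norm_num, by norm_num, ?_⟩
  intro Ω _ _ N d X ε σ hσ hmX hmε hX hε hIndep
  set f : ((Fin N × Fin d) ⊕ Fin N) → Ω → ℝ :=
    Sum.elim (fun (p : Fin N × Fin d) ω => X ω p.1 p.2) (fun (i : Fin N) ω => ε ω i) with hf
  have hm : ∀ k, Measurable (f k) := by
    rintro (p|i)
    · exact hmX p.1 p.2
    · exact (measurable_pi_apply i).comp hmε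
  have hmap : Measure.map (fun ω k => f k ω) ℙ = Measure.pi (fun k => Measure.map (f k) ℙ) :=
    CrossTerm.map_joint_eq_pi f hm hIndep
  have hlaw : (fun k => Measure.map (f k) ℙ)
      = Sum.elim (fun _ : Fin N × Fin d => gaussianReal 0 1)
        (fun _ : Fin N => gaussianReal 0 ⟨σ^2, sq_nonneg σ⟩) := by
    funext k
    rcases k with p | i
    · simpa [hf] using hX p.1 p.2
    · simpa [hf] using hε i
  set G : Set (((Fin N × Fin d) ⊕ Fin N) → ℝ) :=
    {x | Real.sqrt (∑ j : Fin d, (∑ i : Fin N, x (Sum.inl (i,j)) * x (Sum.inr i))^2)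
        ≤ 4 * σ * Real.sqrt ((d:ℝ) * (N:ℝ))} with hG
  have hGmeas : MeasurableSet G := by
    refine measurableSet_le ?_ measurable_const
    apply Measurable.comp Real.continuous_sqrt.measurable
    apply Finset.measurable_sum
    intro j _
    apply Measurable.pow_const
    exact Finset.measurable_sum _ fun i _ =>
      (measurable_pi_apply (Sum.inl (i,j))).mul (measurable_pi_apply (Sum.inr i))
  have hSrw : {ω | Real.sqrt (∑ j : Fin d, ((X ω)ᵀ *ᵥ ε ω) j ^ 2) ≤
      4 * σ * Real.sqrt ((d:ℝ) * (N:ℝ))} = (fun ω k => f k ω) ⁻¹' G := by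
    ext ω
    simp only [Set.mem_setOf_eq, Set.mem_preimage, hG, hf, Matrix.mulVec, dotProduct,
      Matrix.transpose_apply, Sum.elim_inl, Sum.elim_inr]
  have hPS : ℙ {ω | Real.sqrt (∑ j : Fin d, ((X ω)ᵀ *ᵥ ε ω) j ^ 2) ≤
      4 * σ * Real.sqrt ((d:ℝ) * (N:ℝ))}
      = (Measure.pi (Sum.elim (fun _ : Fin N × Fin d => gaussianReal 0 1)
          (fun _ : Fin N => gaussianReal 0 ⟨σ^2, sq_nonneg σ⟩))) G := by
    rw [hSrw, ← Measure.map_apply (measurable_pi_lambda _ hm) hGmeas, hmap, hlaw]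
  have hgoal : (Measure.pi (Sum.elim (fun _ : Fin N × Fin d => gaussianReal 0 1)
      (fun _ : Fin N => gaussianReal 0 ⟨σ^2, sq_nonneg σ⟩))) G
      ≥ 1 - ENNReal.ofReal (2 * Real.exp (-(1/2) * min (d:ℝ) (N:ℝ))) := by
    haveI hPM : ∀ k : ((Fin N × Fin d) ⊕ Fin N),
        IsProbabilityMeasure ((Sum.elim (fun _ : Fin N × Fin d => gaussianReal 0 1)
          (fun _ : Fin N => gaussianReal 0 ⟨σ^2, sq_nonneg σ⟩)) k) := by
      rintro (p|i) <;> · simp only [Sum.elim_inl, Sum.elim_inr]; exact instIsProbabilityMeasureGaussianReal _ _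
    rcases Nat.eq_zero_or_pos d with hd0 | hd
    · have hGuniv : G = Set.univ := by
        rw [hG]
        apply Set.eq_univ_iff_forall.mpr
        intro x
        subst hd0
        simp
      rw [hGuniv]
      simp only [measure_univ]
      exact tsub_le_self
    · rcases Nat.eq_zero_or_pos N with hN0 | hN
      · have hGuniv : G = Set.univ := by
          rw [hG]
          apply Set.eq_univ_iff_forall.mpr
          intro x
          subst hN0
          simp
        rw [hGuniv]
        simp only [measure_univ]
        exact tsub_le_self
      · have hcore := CrossTerm.core N d hN hd hσ
        have hcompl : Gᶜ = {x : ((Fin N × Fin d) ⊕ Fin N) → ℝ |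
            ¬ Real.sqrt (∑ j : Fin d, (∑ i : Fin N, x (Sum.inl (i,j)) * x (Sum.inr i))^2)
              ≤ 4 * σ * Real.sqrt ((d:ℝ) * (N:ℝ))} := by
          rw [hG, Set.compl_setOf]
        rw [← hcompl] at hcore
        rw [ge_iff_le, tsub_le_iff_right]
        have hsum : (Measure.pi (Sum.elim (fun _ : Fin N × Fin d => gaussianReal 0 1)
            (fun _ : Fin N => gaussianReal 0 ⟨σ^2, sq_nonneg σ⟩))) G
            + (Measure.pi (Sum.elim (fun _ : Fin N × Fin d => gaussianReal 0 1)
            (fun _ : Fin N => gaussianReal 0 ⟨σ^2, sq_nonneg σ⟩))) Gᶜ = 1 :=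
          (measure_add_measure_compl hGmeas).trans measure_univ
        rw [← hsum]
        exact add_le_add_right hcore _
  have hfinal := hgoal
  rw [← hPS] at hfinal
  rw [show (((d ⊓ N : ℕ) : ℝ)) = min (d:ℝ) (N:ℝ) from by push_cast; rfl]
  exact hfinal
end
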